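/- Let (g,k) be a reductive symmetric superpair with involution θ and even Cartan subspace 𝔞, and let λ be a restricted root with restricted root space g_{1,𝔞}^λ in the odd part. Then the odd multiplicity m_{1,λ} = dim g_{1,𝔞}^λ is even, and the form b^θ(x,y) = b(x,θy) restricts to a symplectic (nondegenerate alternating) form on the projections k₁^λ and p₁^λ of g₁(λ) = g_{1,𝔞}^λ ⊕ g_{1,𝔞}^{-λ} onto the ±1 eigenspaces of θ. -/

import Mathlib

lemma aux_even_finrank_of_alt_nondeg {V : Type*} [AddCommGroup V] [Module ℂ V]
    [FiniteDimensional ℂ V] (B : LinearMap.BilinForm ℂ V)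
    (halt : ∀ x y : V, B x y = -(B y x)) (hnd : B.Nondegenerate) :
    Even (Module.finrank ℂ V) := by
  set n := Module.finrank ℂ V with hn
  refine (Nat.even_or_odd n).resolve_right fun hodd => ?_
  let bas : Module.Basis (Fin n) ℂ V := Module.finBasis ℂ V
  set M := LinearMap.BilinForm.toMatrix bas B with hM
  have hdet : M.det ≠ 0 := (LinearMap.BilinForm.nondegenerate_iff_det_ne_zero bas).mp hnd
  have htr : M.transpose = -M := by
    ext i j
    simp only [Matrix.transpose_apply, Matrix.neg_apply, hM,
      LinearMap.BilinForm.toMatrix_apply]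
    exact halt (bas j) (bas i)
  have h0 : M.det = -M.det := by
    conv_lhs => rw [← Matrix.det_transpose, htr]
    rw [Matrix.det_neg, Fintype.card_fin]
    rw [hodd.neg_one_pow]
    ring
  exact hdet (by linear_combination h0 / 2)


/-- Let `(g,k)` be a reductive symmetric superpair: `g` a basic quadratic complex Lie
superalgebra with form `b` and involutive automorphism `θ` preserving `b` and the
grading, and let `𝔞 ⊆ p₀` (the `(-1)`-eigenspace of `θ` in `g₀`) be an abelian even
Cartan subspace for which `g` decomposes into simultaneous `𝔞`-eigenspaces, with
finite set `Σ` of restricted weights.  For a restricted root `lam ≠ 0` with odd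
restricted root space `g₁ᵃ^lam`, the odd multiplicity `m₁ = dim g₁ᵃ^lam` is even,
and the form `bᶿ(x,y) = b(x,θy)` restricts to a symplectic (nondegenerate
alternating) form on the projections `k₁^lam`, `p₁^lam` of
`g₁(lam) = g₁ᵃ^lam ⊕ g₁ᵃ^{-lam}` onto the `±1` eigenspaces of `θ`. -/
theorem stmt_14 {g : Type*} [AddCommGroup g] [Module ℂ g] [FiniteDimensional ℂ g]
    (gr : ZMod 2 → Submodule ℂ g) (hgr : DirectSum.IsInternal gr)
    (br : g →ₗ[ℂ] g →ₗ[ℂ] g) (b : g →ₗ[ℂ] g →ₗ[ℂ] ℂ) (θ : g →ₗ[ℂ] g)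
    (hbr_grade : ∀ i j : ZMod 2, ∀ x ∈ gr i, ∀ y ∈ gr j, br x y ∈ gr (i + j))
    (hbr_skew : ∀ i j : ZMod 2, ∀ x ∈ gr i, ∀ y ∈ gr j,
      br x y = -(((-1 : ℂ) ^ (i.val * j.val)) • br y x))
    (hbr_jacobi : ∀ i j : ZMod 2, ∀ x ∈ gr i, ∀ y ∈ gr j, ∀ z : g,
      br x (br y z) = br (br x y) z + ((-1 : ℂ) ^ (i.val * j.val)) • br y (br x z))
    (hb_even : ∀ x ∈ gr 0, ∀ y ∈ gr 1, b x y = 0)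
    (hb_symm : ∀ i j : ZMod 2, ∀ x ∈ gr i, ∀ y ∈ gr j,
      b x y = ((-1 : ℂ) ^ (i.val * j.val)) * b y x)
    (hb_nondeg : ∀ x : g, (∀ y : g, b x y = 0) → x = 0)
    (hb_inv : ∀ x y z : g, b (br x y) z = b x (br y z))
    (hθ_inv : ∀ x : g, θ (θ x) = x)
    (hθ_br : ∀ x y : g, θ (br x y) = br (θ x) (θ y))
    (hθ_b : ∀ x y : g, b (θ x) (θ y) = b x y)
    (hθ_grade : ∀ i : ZMod 2, ∀ x ∈ gr i, θ x ∈ gr i)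
    (𝔞 : Submodule ℂ g) (h𝔞even : 𝔞 ≤ gr 0) (h𝔞p : ∀ a ∈ 𝔞, θ a = -a)
    (h𝔞ab : ∀ a ∈ 𝔞, ∀ a' ∈ 𝔞, br a a' = 0) :
    let rs : ZMod 2 → Module.Dual ℂ 𝔞 → Submodule ℂ g := fun j μ =>
      gr j ⊓ ⨅ h : 𝔞, LinearMap.ker (br h.1 - μ h • (LinearMap.id : g →ₗ[ℂ] g))
    ∀ Sig : Finset (Module.Dual ℂ 𝔞),
      (∀ j : ZMod 2, gr j = ⨆ μ ∈ Sig, rs j μ) →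
      ∀ lam : Module.Dual ℂ 𝔞, lam ∈ Sig → lam ≠ 0 → rs 1 lam ≠ ⊥ →
      let g1lam := rs 1 lam ⊔ rs 1 (-lam)
      let k1lam := g1lam ⊓ LinearMap.ker (θ - LinearMap.id)
      let p1lam := g1lam ⊓ LinearMap.ker (θ + LinearMap.id)
      Even (Module.finrank ℂ (rs 1 lam)) ∧
      (∀ x ∈ k1lam, ∀ y ∈ k1lam, b x (θ y) = -(b y (θ x))) ∧
      (∀ x ∈ k1lam, x ≠ 0 → ∃ y ∈ k1lam, b x (θ y) ≠ 0) ∧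
      (∀ x ∈ p1lam, ∀ y ∈ p1lam, b x (θ y) = -(b y (θ x))) ∧
      (∀ x ∈ p1lam, x ≠ 0 → ∃ y ∈ p1lam, b x (θ y) ≠ 0) := by
  intro rs Sig hSig lam hlamSig hlam hne g1lam k1lam p1lam
  clear hbr_grade hbr_jacobi h𝔞ab hne
  -- membership in restricted root spaces
  have hmem : ∀ (j : ZMod 2) (μ : Module.Dual ℂ 𝔞) (x : g),
      x ∈ rs j μ ↔ x ∈ gr j ∧ ∀ a : 𝔞, br a.1 x = μ a • x := by
    intro j μ x
    simp only [rs, Submodule.mem_inf, Submodule.mem_iInf, LinearMap.mem_ker,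
      LinearMap.sub_apply, LinearMap.smul_apply, LinearMap.id_apply, sub_eq_zero]
  have hval11 : ((1 : ZMod 2).val * (1 : ZMod 2).val) = 1 := rfl
  have hval10 : ((1 : ZMod 2).val * (0 : ZMod 2).val) = 0 := rfl
  -- b vanishes between odd and even parts
  have hA : ∀ x ∈ gr 1, ∀ z ∈ gr 0, b x z = 0 := by
    intro x hx z hz
    rw [hb_symm 1 0 x hx z hz, hval10, pow_zero, one_mul, hb_even z hz x hx]
  -- antisymmetry of bθ on the odd part
  have hanti : ∀ x ∈ gr 1, ∀ y ∈ gr 1, b x (θ y) = -(b y (θ x)) := by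
    intro x hx y hy
    rw [hb_symm 1 1 x hx (θ y) (hθ_grade 1 y hy), hval11, pow_one]
    have h2 : b (θ y) x = b y (θ x) := by
      conv_lhs => rw [← hθ_inv x]
      exact hθ_b y (θ x)
    rw [h2]; ring
  -- orthogonality of eigenvectors with non-opposite eigenvalues
  have heig : ∀ (μ ν : Module.Dual ℂ 𝔞) (x y : g), x ∈ gr 1 →
      (∀ a : 𝔞, br a.1 x = μ a • x) → (∀ a : 𝔞, br a.1 y = ν a • y) →
      μ + ν ≠ 0 → b x y = 0 := by
    intro μ ν x y hx hμ hν hμν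
    obtain ⟨a, ha⟩ : ∃ a : 𝔞, μ a + ν a ≠ 0 := by
      by_contra h
      push_neg at h
      exact hμν (by ext a; simpa using h a)
    have e1 : b (br x a.1) y = b x (br a.1 y) := hb_inv x a.1 y
    have e2 : br x a.1 = -(br a.1 x) := by
      rw [hbr_skew 1 0 x hx a.1 (h𝔞even a.2), hval10, pow_zero, one_smul]
    rw [e2, hμ a, hν a] at e1
    simp only [map_neg, map_smul, LinearMap.neg_apply, LinearMap.smul_apply,
      smul_eq_mul] at e1
    have hmul : (μ a + ν a) * b x y = 0 := by linear_combination -e1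
    exact (mul_eq_zero.mp hmul).resolve_left ha
  -- θ maps rs 1 μ into rs 1 (-μ)
  have hθrs : ∀ (μ : Module.Dual ℂ 𝔞), ∀ x ∈ rs 1 μ, θ x ∈ rs 1 (-μ) := by
    intro μ x hx
    obtain ⟨hx1, hx2⟩ := (hmem 1 μ x).mp hx
    refine (hmem 1 (-μ) (θ x)).mpr ⟨hθ_grade 1 x hx1, fun a => ?_⟩
    have h3 := hθ_br a.1 x
    rw [hx2 a, h𝔞p a.1 a.2, map_smul, map_neg, LinearMap.neg_apply] at h3
    -- h3 : μ a • θ x = -(br a.1 (θ x))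
    have h4 : br a.1 (θ x) = -(μ a • θ x) := neg_eq_iff_eq_neg.mp h3.symm
    rw [h4, LinearMap.neg_apply, neg_smul]
  have hrs_le : ∀ μ : Module.Dual ℂ 𝔞, rs 1 μ ≤ gr 1 :=
    fun μ x hx => ((hmem 1 μ x).mp hx).1
  have hg1_le : g1lam ≤ gr 1 := sup_le (hrs_le lam) (hrs_le (-lam))
  have hθg1 : ∀ x ∈ g1lam, θ x ∈ g1lam := by
    intro x hx
    obtain ⟨x₁, hx₁, x₂, hx₂, rfl⟩ := Submodule.mem_sup.mp hx
    rw [map_add]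
    have t1 : θ x₁ ∈ rs 1 (-lam) := hθrs lam x₁ hx₁
    have t2 : θ x₂ ∈ rs 1 lam := by
      have := hθrs (-lam) x₂ hx₂
      rwa [neg_neg] at this
    exact add_mem (Submodule.mem_sup_right t1) (Submodule.mem_sup_left t2)
  -- a vector orthogonal to all root spaces is zero
  have hjcases : ∀ k : ZMod 2, k = 0 ∨ k = 1 := by decide
  have hscan : ∀ x : g, (∀ (j : ZMod 2), ∀ μ ∈ Sig, ∀ z ∈ rs j μ, b x z = 0) → x = 0 := by
    intro x hx
    refine hb_nondeg x fun y => ?_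
    have hy : y ∈ (⊤ : Submodule ℂ g) := Submodule.mem_top
    rw [← hgr.submodule_iSup_eq_top] at hy
    have hker : (⨆ j, gr j) ≤ LinearMap.ker (b x) := by
      refine iSup_le fun j => ?_
      rw [hSig j]
      refine iSup_le fun μ => iSup_le fun hμ z hz => ?_
      exact LinearMap.mem_ker.mpr (hx j μ hμ z hz)
    exact LinearMap.mem_ker.mp (hker hy)
  -- nondegeneracy of b on g1lam
  have hnd1 : ∀ x ∈ g1lam, (∀ z ∈ g1lam, b x z = 0) → x = 0 := by
    intro x hxg hz
    refine hscan x fun j μ hμ z hzμ => ?_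
    rcases hjcases j with rfl | rfl
    · exact hA x (hg1_le hxg) z ((hmem 0 μ z).mp hzμ).1
    · by_cases hμlam : μ = lam ∨ μ = -lam
      · refine hz z ?_
        rcases hμlam with rfl | rfl
        · exact Submodule.mem_sup_left hzμ
        · exact Submodule.mem_sup_right hzμ
      · push_neg at hμlam
        obtain ⟨x₁, hx₁, x₂, hx₂, rfl⟩ := Submodule.mem_sup.mp hxg
        obtain ⟨hz1, hzeig⟩ := (hmem 1 μ z).mp hzμ
        obtain ⟨hx₁1, hx₁e⟩ := (hmem 1 lam x₁).mp hx₁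
        obtain ⟨hx₂1, hx₂e⟩ := (hmem 1 (-lam) x₂).mp hx₂
        have h1 : b x₁ z = 0 := by
          refine heig lam μ x₁ z hx₁1 hx₁e hzeig fun h => hμlam.2 ?_
          rw [add_comm] at h
          exact eq_neg_of_add_eq_zero_left h
        have h2 : b x₂ z = 0 := by
          refine heig (-lam) μ x₂ z hx₂1 hx₂e hzeig fun h => hμlam.1 ?_
          rw [add_comm] at h
          have := eq_neg_of_add_eq_zero_left h
          rwa [neg_neg] at this
        simp [map_add, LinearMap.add_apply, h1, h2]
  -- k/p membership, decomposition and orthogonality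
  have hk_mem : ∀ x : g, x ∈ k1lam ↔ x ∈ g1lam ∧ θ x = x := by
    intro x
    simp only [k1lam, Submodule.mem_inf, LinearMap.mem_ker, LinearMap.sub_apply,
      LinearMap.id_apply, sub_eq_zero]
  have hp_mem : ∀ x : g, x ∈ p1lam ↔ x ∈ g1lam ∧ θ x = -x := by
    intro x
    simp only [p1lam, Submodule.mem_inf, LinearMap.mem_ker, LinearMap.add_apply,
      LinearMap.id_apply, add_eq_zero_iff_eq_neg]
  have hkp : ∀ x y : g, θ x = x → θ y = -y → b x y = 0 := by
    intro x y hx hy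
    have h1 := hθ_b x y
    rw [hx, hy, map_neg] at h1
    linear_combination -h1 / 2
  have hkp' : ∀ x y : g, θ x = -x → θ y = y → b x y = 0 := by
    intro x y hx hy
    have h1 := hθ_b x y
    rw [hx, hy, map_neg, LinearMap.neg_apply] at h1
    linear_combination -h1 / 2
  have hzk : ∀ z ∈ g1lam, (2⁻¹ : ℂ) • (z + θ z) ∈ k1lam := by
    intro z hz
    refine (hk_mem _).mpr ⟨Submodule.smul_mem _ _ (add_mem hz (hθg1 z hz)), ?_⟩
    rw [map_smul, map_add, hθ_inv, add_comm]
  have hzp : ∀ z ∈ g1lam, (2⁻¹ : ℂ) • (z - θ z) ∈ p1lam := by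
    intro z hz
    refine (hp_mem _).mpr ⟨Submodule.smul_mem _ _ (sub_mem hz (hθg1 z hz)), ?_⟩
    rw [map_smul, map_sub, hθ_inv, ← smul_neg, neg_sub]
  have hdecomp : ∀ z : g, z = (2⁻¹ : ℂ) • (z + θ z) + (2⁻¹ : ℂ) • (z - θ z) := by
    intro z
    rw [← smul_add]
    have : z + θ z + (z - θ z) = (2 : ℂ) • z := by
      rw [two_smul]; abel
    rw [this, smul_smul]
    norm_num
  refine ⟨?_, ?_, ?_, ?_, ?_⟩
  · -- evenness of the odd multiplicity
    set B : LinearMap.BilinForm ℂ (rs 1 lam) :=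
      (b.compl₂ θ).domRestrict₁₂ (rs 1 lam) (rs 1 lam) with hB
    have hBapp : ∀ x y : rs 1 lam, B x y = b x.1 (θ y.1) := fun x y => rfl
    have halt : ∀ x y : rs 1 lam, B x y = -(B y x) := by
      intro x y
      rw [hBapp, hBapp]
      exact hanti x.1 (hrs_le lam x.2) y.1 (hrs_le lam y.2)
    have hBnd : B.Nondegenerate := by
      refine (LinearMap.IsRefl.nondegenerate_iff_separatingLeft
        (fun x y h => by rw [halt, h, neg_zero])).mpr ?_
      intro x hx
      have hx1 : x.1 ∈ g1lam := Submodule.mem_sup_left x.2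
      have hx0 : x.1 = 0 := by
        refine hnd1 x.1 hx1 fun z hzg => ?_
        obtain ⟨z₁, hz₁, z₂, hz₂, rfl⟩ := Submodule.mem_sup.mp hzg
        obtain ⟨hxg1, hxe⟩ := (hmem 1 lam x.1).mp x.2
        obtain ⟨hz₁1, hz₁e⟩ := (hmem 1 lam z₁).mp hz₁
        have h1 : b x.1 z₁ = 0 := by
          refine heig lam lam x.1 z₁ hxg1 hxe hz₁e fun h => hlam ?_
          have h2 : (2 : ℂ) • lam = 0 := by rw [two_smul]; exact h
          have := smul_eq_zero.mp h2
          simpa using this.resolve_left (by norm_num)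
        have hθz₂ : θ z₂ ∈ rs 1 lam := by
          have := hθrs (-lam) z₂ hz₂
          rwa [neg_neg] at this
        have h2 : b x.1 z₂ = 0 := by
          have := hx ⟨θ z₂, hθz₂⟩
          rw [hBapp] at this
          simpa [hθ_inv] using this
        simp [map_add, h1, h2]
      exact Subtype.ext hx0
    exact aux_even_finrank_of_alt_nondeg B halt hBnd
  · intro x hxk y hyk
    exact hanti x (hg1_le ((hk_mem x).mp hxk).1) y (hg1_le ((hk_mem y).mp hyk).1)
  · intro x hxk hx0
    obtain ⟨hxg, hθx⟩ := (hk_mem x).mp hxk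
    by_contra h
    push_neg at h
    refine hx0 (hnd1 x hxg fun z hzg => ?_)
    have hk1 := hzk z hzg
    have hp1 := hzp z hzg
    have e1 : b x ((2⁻¹ : ℂ) • (z + θ z)) = 0 := by
      have hθzk : θ ((2⁻¹ : ℂ) • (z + θ z)) = (2⁻¹ : ℂ) • (z + θ z) :=
        ((hk_mem _).mp hk1).2
      have := h _ hk1
      rwa [hθzk] at this
    have e2 : b x ((2⁻¹ : ℂ) • (z - θ z)) = 0 :=
      hkp x _ hθx ((hp_mem _).mp hp1).2
    calc b x z = b x ((2⁻¹ : ℂ) • (z + θ z) + (2⁻¹ : ℂ) • (z - θ z)) := by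
          rw [← hdecomp z]
      _ = 0 := by rw [map_add, e1, e2, add_zero]
  · intro x hxp y hyp
    exact hanti x (hg1_le ((hp_mem x).mp hxp).1) y (hg1_le ((hp_mem y).mp hyp).1)
  · intro x hxp hx0
    obtain ⟨hxg, hθx⟩ := (hp_mem x).mp hxp
    by_contra h
    push_neg at h
    refine hx0 (hnd1 x hxg fun z hzg => ?_)
    have hk1 := hzk z hzg
    have hp1 := hzp z hzg
    have e1 : b x ((2⁻¹ : ℂ) • (z + θ z)) = 0 :=
      hkp' x _ hθx ((hk_mem _).mp hk1).2
    have e2 : b x ((2⁻¹ : ℂ) • (z - θ z)) = 0 := by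
      have hθzp : θ ((2⁻¹ : ℂ) • (z - θ z)) = -((2⁻¹ : ℂ) • (z - θ z)) :=
        ((hp_mem _).mp hp1).2
      have := h _ hp1
      rw [hθzp, map_neg] at this
      exact neg_eq_zero.mp this
    calc b x z = b x ((2⁻¹ : ℂ) • (z + θ z) + (2⁻¹ : ℂ) • (z - θ z)) := by
          rw [← hdecomp z]
      _ = 0 := by rw [map_add, e1, e2, add_zero]
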